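/- Consider the layer problem of the three-component negative feedback oscillator: N(x,y,z) = (α₁(1/(1+z²) − x), α₂x − 1, α₃(y − z)) and f(x,y,z) = y, with parameters α₁, α₃ > 0 and α₂ > 1. Then (L_N f)(x,y,z) = α₂ x − 1 everywhere, so the contact set is F = {(x,y,z) : y = 0, x = 1/α₂}; and for every point (1/α₂, 0, z) ∈ F, (L_N² f)(1/α₂, 0, z) = α₁ (α₂ − (1 + z²))/(1 + z²). Consequently, every point of F is a nondegenerate (order-one) contact fold except the two points with z = √(α₂ − 1) and z = −√(α₂ − 1), where L_N² f vanishes. -/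

import Mathlib

/-- The Lie derivative of a scalar function g along the vector field N:
(L_N g)(z) = Dg(z) N(z). Iterated Lie derivatives are given by `(lieD N)^[j] g`. -/
noncomputable def lieD {n : ℕ} (N : (Fin n → ℝ) → (Fin n → ℝ))
    (g : (Fin n → ℝ) → ℝ) : (Fin n → ℝ) → ℝ :=
  fun z => fderiv ℝ g z (N z)

lemma fderiv_proj3 (i : Fin 3) (z v : Fin 3 → ℝ) :
    fderiv ℝ (fun p : Fin 3 → ℝ => p i) z v = v i := by
  have h : (fun p : Fin 3 → ℝ => p i)
      = ⇑(ContinuousLinearMap.proj (R := ℝ) (φ := fun _ : Fin 3 => ℝ) i) := rfl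
  rw [h, ContinuousLinearMap.fderiv]
  rfl

lemma fderiv_affine3 (c : ℝ) (z v : Fin 3 → ℝ) :
    fderiv ℝ (fun p : Fin 3 → ℝ => c * p 0 - 1) z v = c * v 0 := by
  have hproj : HasFDerivAt (fun p : Fin 3 → ℝ => p 0)
      (ContinuousLinearMap.proj (R := ℝ) (φ := fun _ : Fin 3 => ℝ) 0) z :=
    (ContinuousLinearMap.proj (R := ℝ) (φ := fun _ : Fin 3 => ℝ) 0).hasFDerivAt
  have h : HasFDerivAt (fun p : Fin 3 → ℝ => c * p 0 - 1)
      (c • ContinuousLinearMap.proj (R := ℝ) (φ := fun _ : Fin 3 => ℝ) 0) z :=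
    (hproj.const_mul c).sub_const 1
  rw [h.fderiv]
  rfl

/-- For the three-component negative feedback oscillator layer problem
(with α₁, α₃ > 0, α₂ > 1): L_N f = α₂x − 1, so the contact set is
F = {y = 0, x = 1/α₂}; on F, L_N² f (1/α₂, 0, z) = α₁(α₂ − (1+z²))/(1+z²), so every
point of F is an order-one contact fold except the two points with z = ±√(α₂ − 1),
where L_N² f vanishes. -/
theorem three_component_oscillator_folds (α₁ α₂ α₃ : ℝ)
    (h₁ : 0 < α₁) (h₃ : 0 < α₃) (h₂ : 1 < α₂)
    (N : (Fin 3 → ℝ) → (Fin 3 → ℝ))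
    (hN : N = fun p => ![α₁ * (1 / (1 + (p 2) ^ 2) - p 0),
      α₂ * p 0 - 1, α₃ * (p 1 - p 2)])
    (f : (Fin 3 → ℝ) → ℝ) (hf : f = fun p => p 1) :
    (∀ p, lieD N f p = α₂ * p 0 - 1) ∧
      ({p : Fin 3 → ℝ | f p = 0 ∧ lieD N f p = 0}
        = {p : Fin 3 → ℝ | p 1 = 0 ∧ p 0 = 1 / α₂}) ∧
      (∀ z : ℝ, (lieD N)^[2] f ![1 / α₂, 0, z] = α₁ * (α₂ - (1 + z ^ 2)) / (1 + z ^ 2)) ∧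
      (∀ z : ℝ, z ≠ Real.sqrt (α₂ - 1) → z ≠ -Real.sqrt (α₂ - 1) →
        (lieD N)^[2] f ![1 / α₂, 0, z] ≠ 0) ∧
      (lieD N)^[2] f ![1 / α₂, 0, Real.sqrt (α₂ - 1)] = 0 ∧
      (lieD N)^[2] f ![1 / α₂, 0, -Real.sqrt (α₂ - 1)] = 0 := by
  have hα₂ : (0:ℝ) < α₂ := lt_trans one_pos h₂
  -- first Lie derivative
  have hL1 : ∀ p, lieD N f p = α₂ * p 0 - 1 := by
    intro p
    simp only [lieD, hf, fderiv_proj3, hN]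
    simp
  have hL1' : lieD N f = fun p => α₂ * p 0 - 1 := funext hL1
  -- second Lie derivative, general formula at the fold points
  have hL2 : ∀ z : ℝ, (lieD N)^[2] f ![1 / α₂, 0, z]
      = α₁ * (α₂ - (1 + z ^ 2)) / (1 + z ^ 2) := by
    intro z
    have hz : (0:ℝ) < 1 + z ^ 2 := by positivity
    show lieD N (lieD N f) ![1 / α₂, 0, z] = _
    rw [hL1']
    simp only [lieD, fderiv_affine3, hN]
    simp only [Matrix.cons_val_zero, Matrix.cons_val_two, Matrix.tail_cons, Matrix.head_cons]
    field_simp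
  refine ⟨hL1, ?_, hL2, ?_, ?_, ?_⟩
  · ext p
    simp only [Set.mem_setOf_eq]
    constructor
    · rintro ⟨h1, h2⟩
      rw [hL1] at h2
      rw [hf] at h1
      refine ⟨h1, ?_⟩
      rw [eq_div_iff (ne_of_gt hα₂)]
      linear_combination h2
    · rintro ⟨h1, h2⟩
      refine ⟨by rw [hf]; exact h1, ?_⟩
      rw [hL1, h2]
      field_simp
      norm_num
  · intro z hzp hzm
    rw [hL2]
    have hz : (0:ℝ) < 1 + z ^ 2 := by positivity
    have hne : α₂ - (1 + z ^ 2) ≠ 0 := by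
      intro h
      have hz2 : z ^ 2 = α₂ - 1 := by linarith
      have habs : Real.sqrt (α₂ - 1) = |z| := by
        rw [← hz2, Real.sqrt_sq_eq_abs]
      rcases abs_choice z with h' | h'
      · exact hzp (by rw [habs, h'])
      · exact hzm (by rw [habs, h']; ring)
    have : α₁ * (α₂ - (1 + z ^ 2)) ≠ 0 := mul_ne_zero (ne_of_gt h₁) hne
    exact div_ne_zero this (ne_of_gt hz)
  · rw [hL2]
    rw [Real.sq_sqrt (by linarith : (0:ℝ) ≤ α₂ - 1)]
    ring_nf
  · rw [hL2]
    rw [neg_pow, Real.sq_sqrt (by linarith : (0:ℝ) ≤ α₂ - 1)]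
    ring_nf
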